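/- arXiv:1808.05426 — 2 statements merged into one kernel-verified Lean document; each statement's English description precedes it below -/
import Mathlib

section
/- Let α > 0 and f_α be the Huber function on ℝ. Then f_α is not averaged: taking x = −2α and y = −α, one has |f_α(x) − f_α(y)| = |x − y| = α while (x − f_α(x)) − (y − f_α(y)) ≠ 0, so no β ∈ (0,1) satisfies |f_α(x)−f_α(y)|² + ((1−β)/β)|(x−f_α(x))−(y−f_α(y))|² ≤ |x−y|². -/
/-- The Huber function is not averaged: for `x = −2α`, `y = −α` one has
`|f x − f y| = |x − y| = α` and `(x − f x) − (y − f y) ≠ 0`, so no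
`β ∈ (0,1)` satisfies the averagedness inequality. -/
theorem stmt_10 (α : ℝ) (hα : 0 < α)
    (f : ℝ → ℝ)
    (hf : ∀ x : ℝ, f x = if |x| ≤ α then x ^ 2 / (2 * α) else |x| - α / 2) :
    |f (-2 * α) - f (-α)| = α ∧ |(-2 * α : ℝ) - (-α)| = α ∧
      ((-2 * α) - f (-2 * α)) - ((-α) - f (-α)) ≠ 0 ∧
      ∀ β : ℝ, 0 < β → β < 1 →
        ¬ (|f (-2 * α) - f (-α)| ^ 2 +
            ((1 - β) / β) * |((-2 * α) - f (-2 * α)) - ((-α) - f (-α))| ^ 2 ≤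
              |(-2 * α : ℝ) - (-α)| ^ 2) := by
  have h1 : f (-2 * α) = 3 * α / 2 := by
    rw [hf]
    rw [abs_of_nonpos (by nlinarith)]
    rw [if_neg (by nlinarith)]
    ring
  have h2 : f (-α) = α / 2 := by
    rw [hf]
    rw [abs_of_nonpos (by nlinarith)]
    simp only [neg_neg]
    rw [if_pos le_rfl]
    field_simp
  rw [h1, h2]
  have e1 : |3 * α / 2 - α / 2| = α := by rw [abs_of_nonneg (by linarith)]; ring
  have e2 : |(-2 * α : ℝ) - (-α)| = α := by
    rw [abs_of_nonpos (by linarith)]; ring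
  have e3 : (-2 * α - 3 * α / 2) - (-α - α / 2) = -2 * α := by ring
  refine ⟨e1, e2, by rw [e3]; intro h; nlinarith, ?_⟩
  intro β hβ hβ1 hle
  rw [e1, e2, e3] at hle
  have : |(-2 : ℝ) * α| = 2 * α := by rw [abs_of_nonpos (by linarith)]; ring
  rw [this] at hle
  have hpos : (1 - β) / β > 0 := div_pos (by linarith) hβ
  have := mul_pos hpos (by positivity : (0:ℝ) < (2*α)^2)
  linarith
end

section
/- Let 0 < ρ < 1, and for α ∈ [0, 2π) let C_α be the closed ball in ℝ² of radius 1 centered at ρ·(cos α, sin α). Then ⋂_{α ∈ [0,2π)} C_α equals the closed ball of radius 1 − ρ centered at the origin. -/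
open Real

private lemma aux_coord (α : ℝ) (i : Fin 2) :
    (EuclideanSpace.equiv (Fin 2) ℝ).symm ![Real.cos α, Real.sin α] i
      = ![Real.cos α, Real.sin α] i := by
  simp [PiLp.continuousLinearEquiv_symm_apply]

private lemma aux_norm (α : ℝ) :
    ‖(EuclideanSpace.equiv (Fin 2) ℝ).symm ![Real.cos α, Real.sin α]‖ = 1 := by
  rw [EuclideanSpace.norm_eq, Fin.sum_univ_two, aux_coord, aux_coord]
  simp only [Matrix.cons_val_zero, Matrix.cons_val_one, Matrix.head_cons,
    Real.norm_eq_abs, sq_abs]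
  rw [add_comm, Real.sin_sq_add_cos_sq, Real.sqrt_one]

/-- The intersection of the closed unit disks centered at `ρ(cos α, sin α)`,
`α ∈ [0, 2π)`, is the closed disk of radius `1 − ρ` centered at the origin. -/
theorem stmt_13 (ρ : ℝ) (hρ0 : 0 < ρ) (hρ1 : ρ < 1) :
    ⋂ α ∈ Set.Ico (0 : ℝ) (2 * π),
        Metric.closedBall
          (ρ • (EuclideanSpace.equiv (Fin 2) ℝ).symm ![Real.cos α, Real.sin α]) 1 =
      Metric.closedBall (0 : EuclideanSpace ℝ (Fin 2)) (1 - ρ) := by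
  have hπ : (0 : ℝ) < π := Real.pi_pos
  ext x
  simp only [Set.mem_iInter, Metric.mem_closedBall, dist_zero_right, Set.mem_Ico]
  constructor
  · intro h
    by_cases hx : x = 0
    · simp [hx]; linarith
    · set r := ‖x‖ with hr
      have hr0 : 0 < r := norm_pos_iff.mpr hx
      have hx2 : x 0 ^ 2 + x 1 ^ 2 = r ^ 2 := by
        have : r = Real.sqrt (x 0 ^ 2 + x 1 ^ 2) := by
          rw [hr, EuclideanSpace.norm_eq, Fin.sum_univ_two]
          simp [Real.norm_eq_abs, sq_abs]
        rw [this, Real.sq_sqrt (by positivity)]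
      set z : ℂ := ⟨-(x 0) / r, -(x 1) / r⟩ with hz
      have habs : ‖z‖ = 1 := by
        rw [Complex.norm_def, Complex.normSq_mk]
        have : -(x 0) / r * (-(x 0) / r) + -(x 1) / r * (-(x 1) / r) = 1 := by
          field_simp
          linarith [hx2]
        rw [this, Real.sqrt_one]
      have hz0 : z ≠ 0 := by
        intro hzz; rw [hzz] at habs; simp at habs
      have hcosθ : Real.cos z.arg = -(x 0) / r := by
        rw [Complex.cos_arg hz0, habs, div_one]
      have hsinθ : Real.sin z.arg = -(x 1) / r := by
        rw [Complex.sin_arg, habs, div_one]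
      have harg := Complex.arg_mem_Ioc z
      set α : ℝ := if z.arg < 0 then z.arg + 2 * π else z.arg with hα
      have hαmem : 0 ≤ α ∧ α < 2 * π := by
        rcases harg with ⟨h1, h2⟩
        by_cases hc : z.arg < 0 <;> simp only [hα, hc, if_true, if_false] <;>
          constructor <;> [linarith; linarith; linarith; linarith]
      have hcos : Real.cos α = -(x 0) / r := by
        by_cases hc : z.arg < 0 <;> simp only [hα, hc, if_true, if_false]
        · rw [Real.cos_add_two_pi]; exact hcosθ
        · exact hcosθ
      have hsin : Real.sin α = -(x 1) / r := by
        by_cases hc : z.arg < 0 <;> simp only [hα, hc, if_true, if_false]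
        · rw [Real.sin_add_two_pi]; exact hsinθ
        · exact hsinθ
      have key := h α hαmem
      have hdist : dist x
          (ρ • (EuclideanSpace.equiv (Fin 2) ℝ).symm ![Real.cos α, Real.sin α]) = r + ρ := by
        rw [EuclideanSpace.dist_eq, Fin.sum_univ_two]
        have e0 : (ρ • (EuclideanSpace.equiv (Fin 2) ℝ).symm ![Real.cos α, Real.sin α]) 0
            = ρ * (-(x 0) / r) := by
          rw [PiLp.smul_apply, aux_coord, smul_eq_mul]
          simp [hcos]
        have e1 : (ρ • (EuclideanSpace.equiv (Fin 2) ℝ).symm ![Real.cos α, Real.sin α]) 1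
            = ρ * (-(x 1) / r) := by
          rw [PiLp.smul_apply, aux_coord, smul_eq_mul]
          simp [hsin]
        rw [e0, e1, Real.dist_eq, Real.dist_eq, sq_abs, sq_abs]
        have hsum : (x 0 - ρ * (-(x 0) / r)) ^ 2 + (x 1 - ρ * (-(x 1) / r)) ^ 2
            = (r + ρ) ^ 2 := by
          have h0 : x 0 - ρ * (-(x 0) / r) = x 0 * ((r + ρ) / r) := by
            field_simp; ring
          have h1 : x 1 - ρ * (-(x 1) / r) = x 1 * ((r + ρ) / r) := by
            field_simp; ring
          rw [h0, h1, mul_pow, mul_pow, ← add_mul, hx2, div_pow]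
          field_simp
        rw [hsum, Real.sqrt_sq (by positivity)]
      rw [hdist] at key
      linarith
  · intro h α _
    calc dist x (ρ • (EuclideanSpace.equiv (Fin 2) ℝ).symm ![Real.cos α, Real.sin α])
        ≤ ‖x‖ + ‖ρ • (EuclideanSpace.equiv (Fin 2) ℝ).symm ![Real.cos α, Real.sin α]‖ := by
          rw [dist_eq_norm]; exact norm_sub_le _ _
      _ = ‖x‖ + ρ := by
          rw [norm_smul, aux_norm, Real.norm_eq_abs, abs_of_pos hρ0, mul_one]
      _ ≤ 1 := by linarith
end
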